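/- arXiv:1110.2225 — 10 statements merged into one kernel-verified Lean document; each statement's English description precedes it below -/
import Mathlib

section
/- Let av(n) = av_{t51}(n) where t51 = N(N(L,L,L),L,L). Then av(0) = 0, av(1) = 1, av(2) = 0, and for all n ≥ 3, av(n) = Σ_{k=1}^{n-2} av(k)·av(n-k-1). -/
inductive TTree : Type
  | L : TTree
  | N : TTree → TTree → TTree → TTree

namespace TTree

/-- `occursAtRoot t T` : the pattern `t` occurs at the root of `T`. -/
def occursAtRoot : TTree → TTree → Prop
  | .L, _ => True
  | .N _ _ _, .L => False
  | .N p q r, .N a b c => occursAtRoot p a ∧ occursAtRoot q b ∧ occursAtRoot r c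

/-- `contains t T` : the pattern `t` occurs at some vertex of `T`. -/
def contains (t : TTree) : TTree → Prop
  | .L => occursAtRoot t .L
  | .N a b c => occursAtRoot t (.N a b c) ∨ contains t a ∨ contains t b ∨ contains t c

/-- `T.avoids t` : the tree `T` avoids the pattern `t`. -/
def avoids (T t : TTree) : Prop := ¬ contains t T

/-- the number of leaves of a ternary tree -/
def leaves : TTree → ℕ
  | .L => 1
  | .N a b c => leaves a + leaves b + leaves c

end TTree

/-- `av t n` : the number of `n`-leaf ternary trees avoiding the pattern `t` -/
noncomputable def av (t : TTree) (n : ℕ) : ℕ :=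
  Set.ncard {T : TTree | T.leaves = n ∧ T.avoids t}

/-- the 5-leaf pattern `t51 = N(N(L,L,L),L,L)` -/
def t51 : TTree := .N (.N .L .L .L) .L .L

deriving instance DecidableEq for TTree

lemma leaves_pos (T : TTree) : 1 ≤ T.leaves := by
  induction T with
  | L => simp [TTree.leaves]
  | N a b c ha hb hc => simp [TTree.leaves]; omega

lemma avoids_L : TTree.L.avoids t51 := by
  simp [TTree.avoids, TTree.contains, TTree.occursAtRoot, t51]

lemma avoids_N_iff (a b c : TTree) :
    (TTree.N a b c).avoids t51 ↔ a = .L ∧ b.avoids t51 ∧ c.avoids t51 := by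
  cases a with
  | L =>
    simp [TTree.avoids, TTree.contains, TTree.occursAtRoot, t51, not_or]
  | N x y z =>
    simp [TTree.avoids, TTree.contains, TTree.occursAtRoot, t51]

def allAvoid : ℕ → Finset TTree
  | 0 => ∅
  | 1 => {TTree.L}
  | (n+2) => (Finset.Icc 1 n).attach.biUnion (fun k =>
      ((allAvoid k.1) ×ˢ (allAvoid (n + 1 - k.1))).image
        (fun p => TTree.N TTree.L p.1 p.2))
decreasing_by
  · have := (Finset.mem_Icc.mp k.2).2; omega
  · have := (Finset.mem_Icc.mp k.2).2; omega

lemma mem_allAvoid : ∀ n (T : TTree), T ∈ allAvoid n ↔ (T.leaves = n ∧ T.avoids t51) := by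
  intro n
  induction n using Nat.strong_induction_on with
  | _ n ih =>
  intro T
  match n with
  | 0 =>
    simp only [allAvoid, Finset.notMem_empty, false_iff, not_and]
    intro h; have := leaves_pos T; omega
  | 1 =>
    simp only [allAvoid, Finset.mem_singleton]
    constructor
    · rintro rfl; exact ⟨rfl, avoids_L⟩
    · rintro ⟨h1, h2⟩
      cases T with
      | L => rfl
      | N a b c =>
        exfalso
        have := leaves_pos a; have := leaves_pos b; have := leaves_pos c
        simp [TTree.leaves] at h1; omega
  | (m+2) =>
    rw [allAvoid]
    simp only [Finset.mem_biUnion, Finset.mem_attach, Finset.mem_image, Finset.mem_product,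
      true_and, Subtype.exists, Prod.exists]
    constructor
    · rintro ⟨k, hk, b, c, ⟨hb, hc⟩, rfl⟩
      have hk' := Finset.mem_Icc.mp hk
      have hb' := (ih k (by omega) b).mp hb
      have hc' := (ih (m + 1 - k) (by omega) c).mp hc
      refine ⟨?_, (avoids_N_iff _ _ _).mpr ⟨rfl, hb'.2, hc'.2⟩⟩
      simp [TTree.leaves, hb'.1, hc'.1]; omega
    · rintro ⟨h1, h2⟩
      cases T with
      | L => simp [TTree.leaves] at h1
      | N a b c =>
        obtain ⟨rfl, hb, hc⟩ := (avoids_N_iff a b c).mp h2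
        have hbp := leaves_pos b; have hcp := leaves_pos c
        simp only [TTree.leaves] at h1
        refine ⟨b.leaves, Finset.mem_Icc.mpr ⟨hbp, by omega⟩, b, c, ⟨?_, ?_⟩, rfl⟩
        · exact (ih b.leaves (by omega) b).mpr ⟨rfl, hb⟩
        · exact (ih (m + 1 - b.leaves) (by omega) c).mpr ⟨by omega, hc⟩

lemma av_eq_card (n : ℕ) : av t51 n = (allAvoid n).card := by
  rw [av, ← Set.ncard_coe_finset]
  congr 1
  ext T
  simp [mem_allAvoid]

lemma card_allAvoid_rec (m : ℕ) :
    (allAvoid (m + 2)).card =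
      ∑ k ∈ Finset.Icc 1 m, (allAvoid k).card * (allAvoid (m + 1 - k)).card := by
  rw [allAvoid]
  rw [Finset.card_biUnion]
  · rw [← Finset.sum_attach (Finset.Icc 1 m)
      (fun k => (allAvoid k).card * (allAvoid (m + 1 - k)).card)]
    apply Finset.sum_congr rfl
    intro k _
    rw [Finset.card_image_of_injective _ (by intro p q h; cases p; cases q; simpa using h),
      Finset.card_product]
  · intro x _ y _ hxy
    apply Finset.disjoint_left.mpr
    rintro T hx hy
    simp only [Finset.mem_image, Finset.mem_product, Prod.exists] at hx hy
    obtain ⟨b, c, ⟨hb, hc⟩, rfl⟩ := hx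
    obtain ⟨b', c', ⟨hb', hc'⟩, hE⟩ := hy
    have hkx := (Finset.mem_Icc.mp x.2)
    have hky := (Finset.mem_Icc.mp y.2)
    have h1 := (mem_allAvoid _ b).mp hb
    cases hE
    have h2 := (mem_allAvoid _ b).mp hb'
    exact hxy (Subtype.ext (h1.1 ▸ h2.1 ▸ rfl))


/-- Recurrence for the avoidance sequence of `t51`. -/
theorem av_t51_recurrence :
    av t51 0 = 0 ∧ av t51 1 = 1 ∧ av t51 2 = 0 ∧
    ∀ n : ℕ, 3 ≤ n →
      av t51 n = ∑ k ∈ Finset.Icc 1 (n - 2), av t51 k * av t51 (n - k - 1) := by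
  refine ⟨?_, ?_, ?_, ?_⟩
  · rw [av_eq_card, allAvoid]; rfl
  · rw [av_eq_card, allAvoid]; rfl
  · rw [av_eq_card]
    show (allAvoid (0 + 2)).card = 0
    rw [card_allAvoid_rec]; simp
  · intro n hn
    obtain ⟨m, rfl⟩ : ∃ m, n = m + 2 := ⟨n - 2, by omega⟩
    rw [av_eq_card, card_allAvoid_rec]
    simp only [Nat.add_sub_cancel]
    apply Finset.sum_congr rfl
    intro k hk
    have := Finset.mem_Icc.mp hk
    have h : m + 2 - k - 1 = m + 1 - k := by omega
    rw [h, av_eq_card, av_eq_card]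
end

section
/- For the pattern t51 = N(N(L,L,L),L,L): for every n ≥ 0, av_{t51}(2n+1) equals the n-th Catalan number, and av_{t51}(2n) = 0. -/
deriving instance DecidableEq for TTree

/-- encoding of binary trees as t51-avoiding ternary trees -/
def toT : Tree Unit → TTree
  | BinaryTree.nil => .L
  | BinaryTree.node _ a b => .N .L (toT a) (toT b)

lemma leaves_toT (t : Tree Unit) : (toT t).leaves = 2 * BinaryTree.numNodes t + 1 := by
  induction t with
  | nil => rfl
  | node _ a b iha ihb =>
      simp [toT, TTree.leaves, iha, ihb, BinaryTree.numNodes]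
      ring

lemma avoids_toT (t : Tree Unit) : (toT t).avoids t51 := by
  induction t with
  | nil => simp [toT, TTree.avoids, TTree.contains, TTree.occursAtRoot, t51]
  | node _ a b iha ihb =>
      simp only [toT, TTree.avoids, TTree.contains, TTree.occursAtRoot, t51] at *
      tauto

lemma toT_injective : Function.Injective toT := by
  intro s t
  induction s generalizing t with
  | nil => cases t <;> simp [toT]
  | node _ a b iha ihb =>
      cases t with
      | nil => simp [toT]
      | node _ a' b' =>
          intro h
          simp only [toT, TTree.N.injEq] at h
          obtain ⟨-, h1, h2⟩ := h
          rw [iha h1, ihb h2]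

lemma avoids_surj (T : TTree) (h : T.avoids t51) : ∃ t : Tree Unit, toT t = T := by
  induction T with
  | L => exact ⟨Tree.nil, rfl⟩
  | N a b c iha ihb ihc =>
      simp only [TTree.avoids, TTree.contains, t51, TTree.occursAtRoot, not_or] at h
      obtain ⟨hroot, ha, hb, hc⟩ := h
      obtain ⟨tb, htb⟩ := ihb hb
      obtain ⟨tc, htc⟩ := ihc hc
      cases a with
      | L =>
          exact ⟨Tree.node () tb tc, by simp [toT, htb, htc]⟩
      | N x y z =>
          exfalso
          exact hroot ⟨⟨trivial, trivial, trivial⟩, trivial, trivial⟩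

lemma leaves_odd (T : TTree) : Odd T.leaves := by
  induction T with
  | L => exact ⟨0, rfl⟩
  | N a b c iha ihb ihc =>
      obtain ⟨x, hx⟩ := iha; obtain ⟨y, hy⟩ := ihb; obtain ⟨z, hz⟩ := ihc
      exact ⟨x + y + z + 1, by simp [TTree.leaves, hx, hy, hz]; ring⟩

/-- The odd-indexed terms of the avoidance sequence of `t51` are the Catalan
numbers and the even-indexed terms vanish. -/
theorem av_t51_catalan (n : ℕ) :
    av t51 (2 * n + 1) = catalan n ∧ av t51 (2 * n) = 0 := by
  constructor
  · have hset : {T : TTree | T.leaves = 2 * n + 1 ∧ T.avoids t51} =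
        ↑((Tree.treesOfNumNodesEq n).image toT) := by
      ext T
      simp only [Set.mem_setOf_eq, Finset.coe_image, Set.mem_image, Finset.mem_coe,
        BinaryTree.mem_treesOfNumNodesEq]
      constructor
      · rintro ⟨hl, hav⟩
        obtain ⟨t, rfl⟩ := avoids_surj T hav
        refine ⟨t, ?_, rfl⟩
        have := leaves_toT t
        omega
      · rintro ⟨t, hn, rfl⟩
        exact ⟨by rw [leaves_toT, hn], avoids_toT t⟩
    rw [av, hset, Set.ncard_coe_finset,
      Finset.card_image_of_injective _ toT_injective,
      BinaryTree.treesOfNumNodesEq_card_eq_catalan]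
  · rw [av]
    convert Set.ncard_empty TTree
    ext T
    simp only [Set.mem_setOf_eq, Set.mem_empty_iff_false, iff_false, not_and]
    intro hl _
    have := leaves_odd T
    rw [hl] at this
    obtain ⟨k, hk⟩ := this
    omega
end

section
/- For all n ≥ 0, av_{t51}(n) = av_{t52}(n), where t51 = N(N(L,L,L),L,L) and t52 = N(L,N(L,L,L),L). -/
/-- the 5-leaf pattern `t52 = N(L,N(L,L,L),L)` -/
def t52 : TTree := .N .L (.N .L .L .L) .L

/-- swap the first two children at every node -/
def swap : TTree → TTree
  | .L => .L
  | .N a b c => .N (swap b) (swap a) (swap c)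

lemma swap_swap : ∀ T, swap (swap T) = T := by
  intro T; induction T with
  | L => rfl
  | N a b c ha hb hc => simp [swap, ha, hb, hc]

lemma swap_injective : Function.Injective swap :=
  Function.LeftInverse.injective swap_swap

lemma leaves_swap : ∀ T, (swap T).leaves = T.leaves := by
  intro T; induction T with
  | L => rfl
  | N a b c ha hb hc => simp [swap, TTree.leaves, ha, hb, hc]; omega

lemma occ_base (a : TTree) :
    TTree.occursAtRoot (.N .L .L .L) (swap a) ↔ TTree.occursAtRoot (.N .L .L .L) a := by
  cases a <;> simp [swap, TTree.occursAtRoot]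

lemma contains_swap : ∀ T, TTree.contains t52 (swap T) ↔ TTree.contains t51 T := by
  intro T; induction T with
  | L => simp [swap, TTree.contains, t51, t52, TTree.occursAtRoot]
  | N a b c ha hb hc =>
    have h := occ_base a
    simp only [swap, TTree.contains, t51, t52, TTree.occursAtRoot] at *
    tauto

/-- The patterns `t51` and `t52` are Wilf equivalent. -/
theorem av_t51_eq_av_t52 (n : ℕ) : av t51 n = av t52 n := by
  unfold av
  have himg : {T : TTree | T.leaves = n ∧ T.avoids t52}
      = swap '' {T : TTree | T.leaves = n ∧ T.avoids t51} := by
    ext T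
    simp only [Set.mem_image, Set.mem_setOf_eq, TTree.avoids]
    constructor
    · rintro ⟨hl, hav⟩
      refine ⟨swap T, ⟨?_, ?_⟩, swap_swap T⟩
      · rw [leaves_swap]; exact hl
      · intro hc
        exact hav (by rw [← contains_swap (swap T), swap_swap] at hc; exact hc)
    · rintro ⟨S, ⟨hl, hav⟩, rfl⟩
      exact ⟨by rw [leaves_swap]; exact hl, fun hc => hav ((contains_swap S).mp hc)⟩
  rw [himg, Set.ncard_image_of_injective _ swap_injective]
end

section
/- Let av(n) = av_{t71}(n) where t71 = N(N(L,L,L),N(L,L,L),L). Then av(0) = 0, av(1) = 1, av(2) = 0, and for all n ≥ 3, av(n) = 2·Σ_{k=1}^{n-2} av(k)·av(n-k-1) − av(n-2). -/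
/-- the 7-leaf pattern `t71 = N(N(L,L,L),N(L,L,L),L)` -/
def t71 : TTree := .N (.N .L .L .L) (.N .L .L .L) .L

namespace TTree

lemma one_le_leaves : ∀ T : TTree, 1 ≤ T.leaves
  | .L => le_refl 1
  | .N a b c => by
      have := one_le_leaves a
      simp only [leaves]; omega

lemma eq_L_of_leaves_eq_one : ∀ T : TTree, T.leaves = 1 → T = .L
  | .L, _ => rfl
  | .N a b c, h => by
      have ha := one_le_leaves a; have hb := one_le_leaves b; have hc := one_le_leaves c
      simp only [leaves] at h; omega

lemma leaves_ne_two : ∀ T : TTree, T.leaves ≠ 2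
  | .L => by simp [leaves]
  | .N a b c => by
      have ha := one_le_leaves a; have hb := one_le_leaves b; have hc := one_le_leaves c
      simp only [leaves]; omega

lemma avoids_t71_L : TTree.L.avoids t71 := by
  simp [avoids, contains, occursAtRoot, t71]

lemma avoids_t71_N (a b c : TTree) : (TTree.N a b c).avoids t71 ↔
    a.avoids t71 ∧ b.avoids t71 ∧ c.avoids t71 ∧ (a = .L ∨ b = .L) := by
  cases a <;> cases b <;>
    simp [avoids, contains, occursAtRoot, t71]

lemma finite_leaves_le (n : ℕ) : {T : TTree | T.leaves ≤ n}.Finite := by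
  induction n with
  | zero =>
      convert Set.finite_empty
      ext T
      have := one_le_leaves T
      simp only [Set.mem_setOf_eq, Set.mem_empty_iff_false, iff_false]
      omega
  | succ n ih =>
      apply Set.Finite.subset
        (((ih.prod (ih.prod ih)).image
          (fun p : TTree × TTree × TTree => TTree.N p.1 p.2.1 p.2.2)).insert TTree.L)
      intro T hT
      cases T with
      | L => exact Set.mem_insert _ _
      | N a b c =>
          apply Set.mem_insert_of_mem
          refine ⟨(a, b, c), ?_, rfl⟩
          have ha := one_le_leaves a; have hb := one_le_leaves b; have hc := one_le_leaves c
          simp only [Set.mem_setOf_eq, leaves] at hT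
          refine ⟨?_, ?_, ?_⟩ <;> simp only [Set.mem_setOf_eq] <;> omega

end TTree

/-- The set of `n`-leaf trees avoiding `t71`. -/
def Sav (n : ℕ) : Set TTree := {T | T.leaves = n ∧ T.avoids t71}

lemma finite_Sav (n : ℕ) : (Sav n).Finite :=
  (TTree.finite_leaves_le n).subset fun _ hT => le_of_eq hT.1

lemma av_eq_ncard (n : ℕ) : av t71 n = (Sav n).ncard := rfl

lemma ncard_prod {α β : Type*} (s : Set α) (t : Set β) :
    (s ×ˢ t).ncard = s.ncard * t.ncard := by
  rw [← Nat.card_coe_set_eq, ← Nat.card_coe_set_eq, ← Nat.card_coe_set_eq,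
    Nat.card_congr (Equiv.Set.prod s t), Nat.card_prod]

lemma av_zero : av t71 0 = 0 := by
  rw [av_eq_ncard]
  convert Set.ncard_empty TTree
  ext T
  have := TTree.one_le_leaves T
  simp only [Sav, Set.mem_setOf_eq, Set.mem_empty_iff_false, iff_false, not_and]
  omega

lemma av_one : av t71 1 = 1 := by
  rw [av_eq_ncard]
  have : Sav 1 = {TTree.L} := by
    ext T
    constructor
    · rintro ⟨h1, _⟩
      exact TTree.eq_L_of_leaves_eq_one T h1
    · rintro rfl
      exact ⟨rfl, TTree.avoids_t71_L⟩
  rw [this, Set.ncard_singleton]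

lemma av_two : av t71 2 = 0 := by
  rw [av_eq_ncard]
  convert Set.ncard_empty TTree
  ext T
  have := TTree.leaves_ne_two T
  simp only [Sav, Set.mem_setOf_eq, Set.mem_empty_iff_false, iff_false, not_and]
  omega

lemma av_main (n : ℕ) (hn : 3 ≤ n) :
    av t71 n + av t71 (n - 2) =
      2 * ∑ k ∈ Finset.Icc 1 (n - 2), av t71 k * av t71 (n - k - 1) := by
  classical
  set P : Set (TTree × TTree) :=
    {p | p.1.avoids t71 ∧ p.2.avoids t71 ∧ p.1.leaves + p.2.leaves = n - 1} with hPdef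
  have hPfin : P.Finite := by
    apply ((TTree.finite_leaves_le (n - 1)).prod (TTree.finite_leaves_le (n - 1))).subset
    rintro p ⟨_, _, h3⟩
    have h1 := TTree.one_le_leaves p.1
    have h2 := TTree.one_le_leaves p.2
    exact ⟨by simp only [Set.mem_setOf_eq]; omega, by simp only [Set.mem_setOf_eq]; omega⟩
  set A : Set TTree := (fun p : TTree × TTree => TTree.N .L p.1 p.2) '' P with hAdef
  set B : Set TTree := (fun p : TTree × TTree => TTree.N p.1 .L p.2) '' P with hBdef
  have hAfin : A.Finite := hPfin.image _
  have hBfin : B.Finite := hPfin.image _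
  have hinjA : Function.Injective (fun p : TTree × TTree => TTree.N .L p.1 p.2) := by
    intro p q h
    simp only [TTree.N.injEq] at h
    exact Prod.ext h.2.1 h.2.2
  have hinjB : Function.Injective (fun p : TTree × TTree => TTree.N p.1 .L p.2) := by
    intro p q h
    simp only [TTree.N.injEq] at h
    exact Prod.ext h.1 h.2.2
  have hinjC : Function.Injective (fun c : TTree => TTree.N .L .L c) := by
    intro p q h
    simp only [TTree.N.injEq] at h
    exact h.2.2
  -- S n = A ∪ B
  have hS : Sav n = A ∪ B := by
    ext T
    constructor
    · rintro ⟨hl, hav⟩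
      cases T with
      | L => simp only [TTree.leaves] at hl; omega
      | N a b c =>
          rw [TTree.avoids_t71_N] at hav
          obtain ⟨ha, hb, hc, hor⟩ := hav
          simp only [TTree.leaves] at hl
          rcases hor with rfl | rfl
          · refine Or.inl ⟨(b, c), ⟨hb, hc, ?_⟩, rfl⟩
            simp only [TTree.leaves] at hl ⊢; omega
          · refine Or.inr ⟨(a, c), ⟨ha, hc, ?_⟩, rfl⟩
            simp only [TTree.leaves] at hl ⊢; omega
    · rintro (⟨p, ⟨h1, h2, h3⟩, rfl⟩ | ⟨p, ⟨h1, h2, h3⟩, rfl⟩)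
      · refine ⟨by simp only [TTree.leaves]; omega, ?_⟩
        rw [TTree.avoids_t71_N]
        exact ⟨TTree.avoids_t71_L, h1, h2, Or.inl rfl⟩
      · refine ⟨by simp only [TTree.leaves]; omega, ?_⟩
        rw [TTree.avoids_t71_N]
        exact ⟨h1, TTree.avoids_t71_L, h2, Or.inr rfl⟩
  -- A ∩ B
  have hAB : A ∩ B = (fun c : TTree => TTree.N .L .L c) '' Sav (n - 2) := by
    ext T
    constructor
    · rintro ⟨⟨p, ⟨hp1, hp2, hp3⟩, rfl⟩, ⟨q, ⟨hq1, hq2, hq3⟩, hEq⟩⟩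
      simp only [TTree.N.injEq] at hEq
      obtain ⟨h1, h2, h3⟩ := hEq
      refine ⟨p.2, ⟨?_, hp2⟩, ?_⟩
      swap
      · show TTree.N .L .L p.2 = TTree.N .L p.1 p.2
        rw [h2]
      rw [← h2] at hp3
      simp only [TTree.leaves] at hp3
      omega
    · rintro ⟨c, ⟨hl, hav⟩, rfl⟩
      constructor
      · exact ⟨(TTree.L, c), ⟨TTree.avoids_t71_L, hav, by simp only [TTree.leaves]; omega⟩, rfl⟩
      · exact ⟨(TTree.L, c), ⟨TTree.avoids_t71_L, hav, by simp only [TTree.leaves]; omega⟩, rfl⟩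
  -- cardinalities
  have hcA : A.ncard = P.ncard := Set.ncard_image_of_injective P hinjA
  have hcB : B.ncard = P.ncard := Set.ncard_image_of_injective P hinjB
  have hcAB : (A ∩ B).ncard = av t71 (n - 2) := by
    rw [hAB, Set.ncard_image_of_injective _ hinjC, av_eq_ncard]
  have hiex := Set.ncard_union_add_ncard_inter A B hAfin hBfin
  -- P as fiberwise sum
  have hPcard : P.ncard = ∑ k ∈ Finset.Icc 1 (n - 2), av t71 k * av t71 (n - k - 1) := by
    rw [Set.ncard_eq_toFinset_card _ hPfin]
    rw [Finset.card_eq_sum_card_fiberwise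
      (f := fun p : TTree × TTree => p.1.leaves) (t := Finset.Icc 1 (n - 2)) ?_]
    · apply Finset.sum_congr rfl
      intro k hk
      simp only [Finset.mem_Icc] at hk
      have hset : ↑(hPfin.toFinset.filter (fun p => p.1.leaves = k))
          = Sav k ×ˢ Sav (n - k - 1) := by
        ext p
        simp only [Finset.coe_filter, Set.Finite.mem_toFinset, Set.mem_setOf_eq,
          Set.mem_prod, hPdef]
        constructor
        · rintro ⟨⟨h1, h2, h3⟩, h4⟩
          exact ⟨⟨h4, h1⟩, ⟨by omega, h2⟩⟩
        · rintro ⟨⟨hl1, h1⟩, ⟨hl2, h2⟩⟩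
          exact ⟨⟨h1, h2, by omega⟩, hl1⟩
      have := congrArg Set.ncard hset
      rw [Set.ncard_coe_finset, ncard_prod] at this
      rw [this, av_eq_ncard, av_eq_ncard]
    · intro p hp
      rw [Finset.mem_coe, Set.Finite.mem_toFinset] at hp
      obtain ⟨h1, h2, h3⟩ := hp
      have hl1 := TTree.one_le_leaves p.1
      have hl2 := TTree.one_le_leaves p.2
      simp only [Finset.mem_coe, Finset.mem_Icc]
      omega
  rw [av_eq_ncard, hS]
  omega

/-- Recurrence for the avoidance sequence of `t71`. -/
theorem av_t71_recurrence :
    av t71 0 = 0 ∧ av t71 1 = 1 ∧ av t71 2 = 0 ∧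
    ∀ n : ℕ, 3 ≤ n →
      (av t71 n : ℤ) =
        2 * ∑ k ∈ Finset.Icc 1 (n - 2), (av t71 k : ℤ) * (av t71 (n - k - 1) : ℤ)
          - (av t71 (n - 2) : ℤ) := by
  refine ⟨av_zero, av_one, av_two, ?_⟩
  intro n hn
  have h := av_main n hn
  have := congrArg (Nat.cast : ℕ → ℤ) h
  push_cast at this
  linarith
end

section
/- The formal power series G(x) = Σ_{n≥0} av_{t71}(n) x^n (with integer or rational coefficients) satisfies the functional equation 2x·G(x)^2 − x^2·G(x) − G(x) + x = 0. -/
deriving instance DecidableEq for TTree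

namespace TTree

def occursDec : (t T : TTree) → Decidable (occursAtRoot t T)
  | .L, _ => isTrue trivial
  | .N _ _ _, .L => isFalse (fun h => h)
  | .N p q r, .N a b c =>
    have h1 : Decidable (occursAtRoot p a) := occursDec p a
    have h2 : Decidable (occursAtRoot q b) := occursDec q b
    have h3 : Decidable (occursAtRoot r c) := occursDec r c
    inferInstanceAs (Decidable (occursAtRoot p a ∧ occursAtRoot q b ∧ occursAtRoot r c))

instance : ∀ t T, Decidable (occursAtRoot t T) := occursDec

def containsDec (t : TTree) : (T : TTree) → Decidable (contains t T)
  | .L => inferInstanceAs (Decidable (occursAtRoot t .L))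
  | .N a b c =>
    have h1 : Decidable (contains t a) := containsDec t a
    have h2 : Decidable (contains t b) := containsDec t b
    have h3 : Decidable (contains t c) := containsDec t c
    inferInstanceAs (Decidable (occursAtRoot t (.N a b c) ∨ contains t a ∨ contains t b ∨ contains t c))

instance : ∀ t T, Decidable (contains t T) := containsDec

instance (T t : TTree) : Decidable (avoids T t) := instDecidableNot

theorem leaves_pos (T : TTree) : 1 ≤ T.leaves := by
  induction T with
  | L => simp [leaves]
  | N a b c ha hb hc => unfold leaves; omega

end TTree

open Finset in
def allTrees : ℕ → Finset TTree
  | 0 => ∅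
  | 1 => {TTree.L}
  | 2 => ∅
  | (n+3) =>
    (antidiagonal n).attach.biUnion fun p =>
      (antidiagonal p.1.1).attach.biUnion fun q =>
        ((allTrees (q.1.1+1)) ×ˢ (allTrees (q.1.2+1)) ×ˢ (allTrees (p.1.2+1))).image
          fun t => TTree.N t.1 t.2.1 t.2.2
termination_by n => n
decreasing_by
  · have hp := Finset.HasAntidiagonal.mem_antidiagonal.mp p.2
    have hq := Finset.HasAntidiagonal.mem_antidiagonal.mp q.2
    omega
  · have hp := Finset.HasAntidiagonal.mem_antidiagonal.mp p.2
    have hq := Finset.HasAntidiagonal.mem_antidiagonal.mp q.2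
    omega
  · have hp := Finset.HasAntidiagonal.mem_antidiagonal.mp p.2
    omega

theorem mem_allTrees : ∀ (n : ℕ) (T : TTree), T ∈ allTrees n ↔ T.leaves = n := by
  intro n
  induction n using Nat.strong_induction_on with
  | _ n ih =>
    match n with
    | 0 =>
      intro T
      have := T.leaves_pos
      simp [allTrees]
      omega
    | 1 =>
      intro T
      rw [allTrees]
      constructor
      · intro h
        simp at h
        subst h
        rfl
      · intro h
        cases T with
        | L => simp
        | N a b c =>
          exfalso
          have := a.leaves_pos; have := b.leaves_pos; have := c.leaves_pos
          simp [TTree.leaves] at h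
          omega
    | 2 =>
      intro T
      simp only [allTrees, Finset.notMem_empty, false_iff]
      intro h
      cases T with
      | L => simp [TTree.leaves] at h
      | N a b c =>
        have := a.leaves_pos; have := b.leaves_pos; have := c.leaves_pos
        simp [TTree.leaves] at h
        omega
    | (m+3) =>
      intro T
      rw [allTrees]
      simp only [Finset.mem_biUnion, Finset.mem_attach, true_and, Subtype.exists,
        Finset.mem_image, Finset.mem_product, Finset.HasAntidiagonal.mem_antidiagonal]
      constructor
      · rintro ⟨p, hp, q, hq, ⟨⟨a, b, c⟩, ⟨ha, hb, hc⟩, rfl⟩⟩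
        have ha' := (ih (q.1+1) (by omega) a).mp ha
        have hb' := (ih (q.2+1) (by omega) b).mp hb
        have hc' := (ih (p.2+1) (by omega) c).mp hc
        simp [TTree.leaves]
        omega
      · intro h
        cases T with
        | L => simp [TTree.leaves] at h
        | N a b c =>
          have h1 := a.leaves_pos; have h2 := b.leaves_pos; have h3 := c.leaves_pos
          simp only [TTree.leaves] at h
          refine ⟨(a.leaves - 1 + (b.leaves - 1), c.leaves - 1), by omega,
            (a.leaves - 1, b.leaves - 1), by omega,
            ⟨(a, b, c), ⟨?_, ?_, ?_⟩, rfl⟩⟩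
          · rw [ih (a.leaves - 1 + 1) (by omega)]; show a.leaves = _; omega
          · rw [ih (b.leaves - 1 + 1) (by omega)]; show b.leaves = _; omega
          · rw [ih (c.leaves - 1 + 1) (by omega)]; show c.leaves = _; omega

open TTree Finset

theorem occurs_t71 (a b c : TTree) :
    occursAtRoot t71 (.N a b c) ↔ (a ≠ .L ∧ b ≠ .L) := by
  cases a <;> cases b <;> simp [t71, occursAtRoot]

theorem avoids_L_s6 : TTree.L.avoids t71 := by
  simp [avoids, contains, t71, occursAtRoot]

theorem avoids_N (a b c : TTree) :
    (TTree.N a b c).avoids t71 ↔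
      (¬(a ≠ TTree.L ∧ b ≠ TTree.L) ∧ a.avoids t71 ∧ b.avoids t71 ∧ c.avoids t71) := by
  simp only [avoids, contains, occurs_t71]
  tauto

noncomputable def S (n : ℕ) : Finset TTree := (allTrees n).filter (fun T => T.avoids t71)
noncomputable def SI (n : ℕ) : Finset TTree :=
  (allTrees n).filter (fun T => T.avoids t71 ∧ T ≠ .L)
noncomputable def A (n : ℕ) : ℕ := (S n).card
noncomputable def B (n : ℕ) : ℕ := (SI n).card

theorem mem_S {n : ℕ} {T : TTree} : T ∈ S n ↔ T.leaves = n ∧ T.avoids t71 := by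
  simp [S, mem_allTrees]

theorem mem_SI {n : ℕ} {T : TTree} : T ∈ SI n ↔ T.leaves = n ∧ T.avoids t71 ∧ T ≠ .L := by
  simp [SI, mem_allTrees]

theorem av_eq (n : ℕ) : av t71 n = A n := by
  have h : {T : TTree | T.leaves = n ∧ T.avoids t71} = ↑(S n) := by
    ext T; simp [mem_S]
  rw [av, h, Set.ncard_coe_finset, A]

theorem A_eq (n : ℕ) : A n = B n + (if n = 1 then 1 else 0) := by
  rw [A, B]
  rw [← Finset.card_filter_add_card_filter_not (s := S n) (p := fun T => T ≠ TTree.L)]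
  congr 1
  · rw [SI]
    rw [S, Finset.filter_filter]
  · split_ifs with h
    · subst h
      have : (S 1).filter (fun T => ¬ T ≠ TTree.L) = {TTree.L} := by
        ext T
        simp only [Finset.mem_filter, mem_S, not_not, Finset.mem_singleton]
        constructor
        · rintro ⟨_, h⟩; exact h
        · rintro rfl; exact ⟨⟨rfl, avoids_L_s6⟩, rfl⟩
      rw [this, Finset.card_singleton]
    · rw [Finset.card_eq_zero]
      ext T
      simp only [Finset.mem_filter, mem_S, not_not, Finset.notMem_empty, iff_false]
      rintro ⟨⟨hl, _⟩, rfl⟩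
      exact h (by simpa [leaves] using hl.symm)

/-- the triple-to-tree map -/
def mkN (t : TTree × TTree × TTree) : TTree := TTree.N t.1 t.2.1 t.2.2

theorem mkN_inj : Function.Injective mkN := by
  rintro ⟨a, b, c⟩ ⟨a', b', c'⟩ h
  simp only [mkN, TTree.N.injEq] at h
  simp [h.1, h.2.1, h.2.2]

noncomputable def goodT (i j k : ℕ) : Finset (TTree × TTree × TTree) :=
  (S i ×ˢ S j ×ˢ S k).filter fun t => ¬(t.1 ≠ TTree.L ∧ t.2.1 ≠ TTree.L)

noncomputable def innr (p : ℕ × ℕ) : Finset TTree :=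
  (antidiagonal p.1).biUnion fun q => (goodT q.1 q.2 p.2).image mkN

theorem mem_image_goodT {i j k : ℕ} {T : TTree} (h : T ∈ (goodT i j k).image mkN) :
    ∃ a b c, T = TTree.N a b c ∧ a.leaves = i ∧ b.leaves = j ∧ c.leaves = k := by
  simp only [goodT, Finset.mem_image, Finset.mem_filter, Finset.mem_product] at h
  obtain ⟨⟨a, b, c⟩, ⟨⟨ha, hb, hc⟩, -⟩, rfl⟩ := h
  exact ⟨a, b, c, rfl, (mem_S.mp ha).1, (mem_S.mp hb).1, (mem_S.mp hc).1⟩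

theorem mem_innr {p : ℕ × ℕ} {T : TTree} (h : T ∈ innr p) :
    ∃ a b c, T = TTree.N a b c ∧ a.leaves + b.leaves = p.1 ∧ c.leaves = p.2 := by
  simp only [innr, Finset.mem_biUnion] at h
  obtain ⟨q, hq, hT⟩ := h
  obtain ⟨a, b, c, rfl, h1, h2, h3⟩ := mem_image_goodT hT
  rw [Finset.HasAntidiagonal.mem_antidiagonal] at hq
  exact ⟨a, b, c, rfl, by omega, h3⟩

theorem SI_eq (n : ℕ) : SI n = (antidiagonal n).biUnion innr := by
  ext T
  simp only [Finset.mem_biUnion, mem_SI]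
  constructor
  · rintro ⟨hl, hav, hne⟩
    cases T with
    | L => exact absurd rfl hne
    | N a b c =>
      rw [avoids_N] at hav
      obtain ⟨hroot, ha, hb, hc⟩ := hav
      simp only [leaves] at hl
      refine ⟨(a.leaves + b.leaves, c.leaves), by rw [Finset.HasAntidiagonal.mem_antidiagonal]; omega, ?_⟩
      simp only [innr, Finset.mem_biUnion]
      refine ⟨(a.leaves, b.leaves), by rw [Finset.HasAntidiagonal.mem_antidiagonal], ?_⟩
      simp only [goodT, Finset.mem_image]
      exact ⟨(a, b, c), Finset.mem_filter.mpr ⟨Finset.mem_product.mpr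
        ⟨mem_S.mpr ⟨rfl, ha⟩, Finset.mem_product.mpr ⟨mem_S.mpr ⟨rfl, hb⟩, mem_S.mpr ⟨rfl, hc⟩⟩⟩,
        hroot⟩, rfl⟩
  · rintro ⟨p, hp, hT⟩
    rw [Finset.HasAntidiagonal.mem_antidiagonal] at hp
    simp only [innr, Finset.mem_biUnion] at hT
    obtain ⟨q, hq, hT⟩ := hT
    rw [Finset.HasAntidiagonal.mem_antidiagonal] at hq
    simp only [goodT, Finset.mem_image, Finset.mem_filter, Finset.mem_product] at hT
    obtain ⟨⟨a, b, c⟩, ⟨⟨ha, hb, hc⟩, hroot⟩, rfl⟩ := hT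
    obtain ⟨ha1, ha2⟩ := mem_S.mp ha
    obtain ⟨hb1, hb2⟩ := mem_S.mp hb
    obtain ⟨hc1, hc2⟩ := mem_S.mp hc
    refine ⟨?_, ?_, by simp [mkN]⟩
    · show (TTree.N a b c).leaves = n
      dsimp only at ha1 hb1 hc1
      simp only [leaves]
      omega
    · rw [mkN, avoids_N]
      exact ⟨hroot, ha2, hb2, hc2⟩

theorem B_eq (n : ℕ) :
    B n + ∑ p ∈ antidiagonal n, ∑ q ∈ antidiagonal p.1, B q.1 * B q.2 * A p.2
      = ∑ p ∈ antidiagonal n, ∑ q ∈ antidiagonal p.1, A q.1 * A q.2 * A p.2 := by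
  have hinnr : ∀ p : ℕ × ℕ, (innr p).card = ∑ q ∈ antidiagonal p.1, (goodT q.1 q.2 p.2).card := by
    intro p
    rw [innr, Finset.card_biUnion]
    · exact Finset.sum_congr rfl fun q _ => Finset.card_image_of_injective _ mkN_inj
    · intro q hq q' hq' hne
      rw [Function.onFun, Finset.disjoint_left]
      intro T h1 h2
      obtain ⟨a, b, c, rfl, e1, e2, e3⟩ := mem_image_goodT h1
      obtain ⟨a', b', c', heq, f1, f2, f3⟩ := mem_image_goodT h2
      rw [TTree.N.injEq] at heq
      apply hne
      obtain ⟨r1, r2, r3⟩ := heq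
      subst r1; subst r2; subst r3
      have hh1 : q.1 = q'.1 := by omega
      have hh2 : q.2 = q'.2 := by omega
      exact Prod.ext hh1 hh2
  have hB : B n = ∑ p ∈ antidiagonal n, ∑ q ∈ antidiagonal p.1, (goodT q.1 q.2 p.2).card := by
    rw [B, SI_eq, Finset.card_biUnion]
    · exact Finset.sum_congr rfl fun p _ => hinnr p
    · intro p hp p' hp' hne
      rw [Function.onFun, Finset.disjoint_left]
      intro T h1 h2
      obtain ⟨a, b, c, rfl, e1, e2⟩ := mem_innr h1
      obtain ⟨a', b', c', heq, f1, f2⟩ := mem_innr h2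
      rw [TTree.N.injEq] at heq
      apply hne
      obtain ⟨r1, r2, r3⟩ := heq
      subst r1; subst r2; subst r3
      have hh1 : p.1 = p'.1 := by omega
      have hh2 : p.2 = p'.2 := by omega
      exact Prod.ext hh1 hh2
  have hgood : ∀ i j k : ℕ, (goodT i j k).card + B i * B j * A k = A i * A j * A k := by
    intro i j k
    have hsplit := Finset.card_filter_add_card_filter_not
      (s := S i ×ˢ S j ×ˢ S k) (p := fun t => (t.1 ≠ TTree.L ∧ t.2.1 ≠ TTree.L))
    have hfil : (S i ×ˢ S j ×ˢ S k).filter (fun t => (t.1 ≠ TTree.L ∧ t.2.1 ≠ TTree.L))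
        = SI i ×ˢ SI j ×ˢ S k := by
      ext ⟨a, b, c⟩
      simp only [Finset.mem_filter, Finset.mem_product, mem_S, mem_SI]
      tauto
    have key : (goodT i j k).card + (SI i ×ˢ SI j ×ˢ S k).card
        = (S i ×ˢ S j ×ˢ S k).card := by
      have hrfl : (goodT i j k).card = ((S i ×ˢ S j ×ˢ S k).filter
        (fun t => ¬(t.1 ≠ TTree.L ∧ t.2.1 ≠ TTree.L))).card := rfl
      rw [hfil] at hsplit
      omega
    have e1 : (S i ×ˢ S j ×ˢ S k).card = A i * A j * A k := by
      rw [Finset.card_product, Finset.card_product]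
      show A i * (A j * A k) = _
      ring
    have e2 : (SI i ×ˢ SI j ×ˢ S k).card = B i * B j * A k := by
      rw [Finset.card_product, Finset.card_product]
      show B i * (B j * A k) = _
      ring
    rw [← e1, ← e2]
    exact key
  rw [hB, ← Finset.sum_add_distrib]
  refine Finset.sum_congr rfl fun p _ => ?_
  rw [← Finset.sum_add_distrib]
  exact Finset.sum_congr rfl fun q _ => hgood q.1 q.2 p.2

noncomputable def GA : PowerSeries ℚ := PowerSeries.mk fun n => (A n : ℚ)
noncomputable def GB : PowerSeries ℚ := PowerSeries.mk fun n => (B n : ℚ)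

theorem key1 : GB + GB ^ 2 * GA = GA ^ 3 := by
  ext n
  have h' : ((B n : ℚ)) + ∑ p ∈ antidiagonal n, ∑ q ∈ antidiagonal p.1,
      (B q.1 : ℚ) * (B q.2 : ℚ) * (A p.2 : ℚ)
      = ∑ p ∈ antidiagonal n, ∑ q ∈ antidiagonal p.1,
      (A q.1 : ℚ) * (A q.2 : ℚ) * (A p.2 : ℚ) := by
    exact_mod_cast B_eq n
  rw [map_add, GA, GB, PowerSeries.coeff_mk, pow_two, pow_succ, pow_two,
    PowerSeries.coeff_mul, PowerSeries.coeff_mul]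
  simp only [PowerSeries.coeff_mul, PowerSeries.coeff_mk, Finset.sum_mul]
  exact h'

theorem key2 : GA = PowerSeries.X + GB := by
  ext n
  rw [map_add, PowerSeries.coeff_X, GA, GB, PowerSeries.coeff_mk, PowerSeries.coeff_mk, A_eq]
  split_ifs with h <;> push_cast <;> ring


open PowerSeries in
/-- The generating function `G(x) = Σ av_{t71}(n) xⁿ` satisfies
`2x·G(x)² − x²·G(x) − G(x) + x = 0`. -/
theorem av_t71_gf :
    let G : PowerSeries ℚ := PowerSeries.mk fun n => (av t71 n : ℚ)
    2 * X * G ^ 2 - X ^ 2 * G - G + X = 0 := by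
  intro G
  have hG : G = GA := by
    show PowerSeries.mk (fun n => (av t71 n : ℚ)) = GA
    ext n
    rw [GA, PowerSeries.coeff_mk, PowerSeries.coeff_mk, av_eq]
  rw [hG]
  have h3 : GB = GA - PowerSeries.X := by rw [key2]; ring
  have h := key1
  rw [h3] at h
  linear_combination -h
end

section
/- For all n ≥ 0, av_{t71}(n) = av_{t72}(n), where t71 = N(N(L,L,L),N(L,L,L),L) and t72 = N(N(L,L,L),L,N(L,L,L)). -/
/-- the 7-leaf pattern `t72 = N(N(L,L,L),L,N(L,L,L))` -/
def t72 : TTree := .N (.N .L .L .L) .L (.N .L .L .L)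

/-- swap middle and right children at every node -/
def tswap : TTree → TTree
  | .L => .L
  | .N a b c => .N (tswap a) (tswap c) (tswap b)

lemma tswap_tswap (T : TTree) : tswap (tswap T) = T := by
  induction T with
  | L => rfl
  | N a b c ha hb hc => simp [tswap, ha, hb, hc]

lemma tswap_inj : Function.Injective tswap :=
  Function.LeftInverse.injective tswap_tswap

lemma leaves_tswap (T : TTree) : (tswap T).leaves = T.leaves := by
  induction T with
  | L => rfl
  | N a b c ha hb hc => simp [tswap, TTree.leaves, ha, hb, hc]; omega

lemma occ_NLLL_tswap (x : TTree) :
    TTree.occursAtRoot (.N .L .L .L) (tswap x) ↔ TTree.occursAtRoot (.N .L .L .L) x := by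
  cases x <;> simp [tswap, TTree.occursAtRoot]

lemma contains_tswap (T : TTree) : TTree.contains t71 (tswap T) ↔ TTree.contains t72 T := by
  induction T with
  | L => simp [tswap, TTree.contains, t71, t72, TTree.occursAtRoot]
  | N a b c ha hb hc =>
    simp only [tswap, TTree.contains, t71, t72, TTree.occursAtRoot, ha, hb, hc,
      occ_NLLL_tswap]
    tauto

lemma avoids_tswap (T : TTree) : (tswap T).avoids t71 ↔ T.avoids t72 := by
  unfold TTree.avoids
  rw [contains_tswap]

/-- The patterns `t71` and `t72` are Wilf equivalent. -/
theorem av_t71_eq_av_t72 (n : ℕ) : av t71 n = av t72 n := by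
  unfold av
  have hset : {T : TTree | T.leaves = n ∧ T.avoids t71}
      = tswap '' {T : TTree | T.leaves = n ∧ T.avoids t72} := by
    ext T
    constructor
    · rintro ⟨h1, h2⟩
      refine ⟨tswap T, ⟨?_, ?_⟩, tswap_tswap T⟩
      · rw [leaves_tswap]; exact h1
      · rw [← avoids_tswap, tswap_tswap]; exact h2
    · rintro ⟨S, ⟨h1, h2⟩, rfl⟩
      exact ⟨by rw [leaves_tswap]; exact h1, (avoids_tswap S).mpr h2⟩
  rw [hset, Set.ncard_image_of_injective _ tswap_inj]
end

section
/- For all n ≥ 0, av_{t73}(n) = av_{t77}(n), where t73 = N(N(N(L,L,L),L,L),L,L) and t77 = N(L,N(L,N(L,L,L),L),L). -/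
/-- the 7-leaf pattern `t73 = N(N(N(L,L,L),L,L),L,L)` -/
def t73 : TTree := .N (.N (.N .L .L .L) .L .L) .L .L

/-- the 7-leaf pattern `t77 = N(L,N(L,N(L,L,L),L),L)` -/
def t77 : TTree := .N .L (.N .L (.N .L .L .L) .L) .L

namespace TTree

/-- swap left and center children recursively -/
def swap : TTree → TTree
  | .L => .L
  | .N a b c => .N (swap b) (swap a) (swap c)

lemma swap_swap : ∀ T : TTree, swap (swap T) = T
  | .L => rfl
  | .N a b c => by simp [swap, swap_swap a, swap_swap b, swap_swap c]

lemma leaves_swap : ∀ T : TTree, (swap T).leaves = T.leaves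
  | .L => rfl
  | .N a b c => by
    simp [swap, leaves, leaves_swap a, leaves_swap b, leaves_swap c]; ring

lemma occursAtRoot_swap : ∀ t T : TTree,
    occursAtRoot (swap t) (swap T) ↔ occursAtRoot t T
  | .L, _ => Iff.rfl
  | .N p q r, .L => Iff.rfl
  | .N p q r, .N a b c => by
    simp only [swap, occursAtRoot, occursAtRoot_swap q b, occursAtRoot_swap p a,
      occursAtRoot_swap r c]
    tauto

lemma contains_swap (t : TTree) : ∀ T : TTree,
    contains (swap t) (swap T) ↔ contains t T
  | .L => by
    cases t with
    | L => simp [swap, contains, occursAtRoot]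
    | N p q r => simp [swap, contains, occursAtRoot]
  | .N a b c => by
    have : swap (TTree.N a b c) = .N (swap b) (swap a) (swap c) := rfl
    rw [this]
    simp only [contains, contains_swap t a, contains_swap t b, contains_swap t c]
    have h := occursAtRoot_swap t (.N a b c)
    rw [this] at h
    rw [h]
    tauto

lemma swap_injective : Function.Injective swap := by
  intro a b h
  rw [← swap_swap a, h, swap_swap]

end TTree

/-- The patterns `t73` and `t77` are Wilf equivalent. -/
theorem av_t73_eq_av_t77 (n : ℕ) : av t73 n = av t77 n := by
  have hswap : TTree.swap t73 = t77 := rfl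
  have hset : {T : TTree | T.leaves = n ∧ T.avoids t77} =
      TTree.swap '' {T : TTree | T.leaves = n ∧ T.avoids t73} := by
    ext T
    constructor
    · rintro ⟨hl, ha⟩
      refine ⟨TTree.swap T, ⟨?_, ?_⟩, TTree.swap_swap T⟩
      · rw [TTree.leaves_swap]; exact hl
      · intro hc
        apply ha
        rw [← hswap, ← TTree.swap_swap T, TTree.contains_swap]
        exact hc
    · rintro ⟨S, ⟨hl, ha⟩, rfl⟩
      refine ⟨by rw [TTree.leaves_swap]; exact hl, ?_⟩
      intro hc
      apply ha
      rw [← hswap, TTree.contains_swap] at hc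
      exact hc
  unfold av
  rw [hset, Set.ncard_image_of_injective _ TTree.swap_injective]
end

section
/- For all n ≥ 0, av_{t71}(n) = av_{t74}(n), where t71 = N(N(L,L,L),N(L,L,L),L) and t74 = N(N(L,N(L,L,L),L),L,L). -/
/-- the 7-leaf pattern `t74 = N(N(L,N(L,L,L),L),L,L)` -/
def t74 : TTree := .N (.N .L (.N .L .L .L) .L) .L .L

namespace TTree

def graft : TTree → TTree → TTree → TTree
  | .L, b, c => .N .L b c
  | .N p q r, b, c => .N (.N p b c) q r

/-- The bijection. -/
def phi : TTree → TTree
  | .L => .L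
  | .N a b c => graft (phi a) (phi b) (phi c)

/-- The inverse bijection. -/
def psi : TTree → TTree
  | .L => .L
  | .N .L y z => .N .L (psi y) (psi z)
  | .N (.N p β γ) y z => .N (psi (.N p y z)) (psi β) (psi γ)
termination_by T => sizeOf T
decreasing_by all_goals (simp; try omega)

lemma graft_ne_L (x b c : TTree) : graft x b c ≠ .L := by
  cases x <;> simp [graft]

lemma exists_graft (x b c : TTree) : ∃ p q r, graft x b c = .N p q r := by
  cases x <;> simp [graft]

lemma leaves_graft (x b c : TTree) :
    (graft x b c).leaves = x.leaves + b.leaves + c.leaves := by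
  cases x <;> (simp [graft, leaves]; try omega)

lemma leaves_phi (T : TTree) : (phi T).leaves = T.leaves := by
  induction T with
  | L => rfl
  | N a b c iha ihb ihc => simp [phi, leaves_graft, leaves, iha, ihb, ihc]

lemma psi_phi (T : TTree) : psi (phi T) = T := by
  induction T with
  | L => simp [phi, psi]
  | N a b c iha ihb ihc =>
    cases a with
    | L =>
      show psi (graft (phi .L) (phi b) (phi c)) = _
      simp [phi, graft, psi, ihb, ihc]
    | N a1 a2 a3 =>
      obtain ⟨p, q, r, h⟩ := exists_graft (phi a1) (phi a2) (phi a3)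
      have h' : phi (.N a1 a2 a3) = .N p q r := by rw [phi]; exact h
      show psi (graft (phi (.N a1 a2 a3)) (phi b) (phi c)) = _
      rw [h', graft, psi, ← h', iha, ihb, ihc]

lemma phi_psi (T : TTree) : phi (psi T) = T := by
  induction T using psi.induct with
  | case1 => simp [phi, psi]
  | case2 y z ihy ihz =>
    rw [psi]
    show graft (phi .L) (phi (psi y)) (phi (psi z)) = _
    simp [phi, graft, ihy, ihz]
  | case3 p β γ y z ih ihβ ihγ =>
    rw [psi]
    show graft (phi (psi (.N p y z))) (phi (psi β)) (phi (psi γ)) = _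
    rw [ih, ihβ, ihγ]
    rfl

lemma phi_eq_L_iff (T : TTree) : phi T = .L ↔ T = .L := by
  cases T with
  | L => simp [phi]
  | N a b c => simp [phi]; exact graft_ne_L _ _ _

/-- internality test via the 3-leaf pattern -/
lemma occ3_iff (x : TTree) : occursAtRoot (.N .L .L .L) x ↔ x ≠ .L := by
  cases x <;> simp [occursAtRoot]

lemma occ3_phi (x : TTree) :
    occursAtRoot (.N .L .L .L) (phi x) ↔ occursAtRoot (.N .L .L .L) x := by
  rw [occ3_iff, occ3_iff, not_iff_not, phi_eq_L_iff]

end TTree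

open TTree in
lemma contains_phi (T : TTree) : contains t71 T ↔ contains t74 (phi T) := by
  induction T with
  | L => simp [phi, contains, occursAtRoot, t71, t74]
  | N a b c iha ihb ihc =>
    cases a with
    | L =>
      have h : phi (.N .L b c) = .N .L (phi b) (phi c) := by rw [phi]; rfl
      rw [h]
      simp only [contains, occursAtRoot, t71, t74]
      simp only [contains, occursAtRoot, t71, t74] at iha ihb ihc
      tauto
    | N a1 a2 a3 =>
      obtain ⟨p, q, r, h⟩ := exists_graft (phi a1) (phi a2) (phi a3)
      have h' : phi (.N a1 a2 a3) = .N p q r := by rw [phi]; exact h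
      have h2 : phi (.N (.N a1 a2 a3) b c)
          = .N (.N p (phi b) (phi c)) q r := by
        show graft (phi (.N a1 a2 a3)) (phi b) (phi c) = _
        rw [h', graft]
      rw [h2]
      rw [h'] at iha
      simp only [contains, occursAtRoot, t71, t74, true_and, and_true,
        false_or, or_false] at iha ihb ihc ⊢
      rw [occ3_phi b, iha, ihb, ihc]
      clear h h' h2 iha ihb ihc
      tauto

open TTree in
lemma avoids_phi (T : TTree) : T.avoids t71 ↔ (phi T).avoids t74 :=
  not_congr (contains_phi T)

/-- The patterns `t71` and `t74` are Wilf equivalent. -/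
theorem av_t71_eq_av_t74 (n : ℕ) : av t71 n = av t74 n := by
  have hinj : Function.Injective TTree.phi :=
    Function.LeftInverse.injective TTree.psi_phi
  have himg : {T : TTree | T.leaves = n ∧ T.avoids t74}
      = TTree.phi '' {T : TTree | T.leaves = n ∧ T.avoids t71} := by
    ext U
    constructor
    · rintro ⟨hl, ha⟩
      refine ⟨TTree.psi U, ⟨?_, ?_⟩, TTree.phi_psi U⟩
      · rw [← TTree.leaves_phi, TTree.phi_psi]; exact hl
      · rw [avoids_phi, TTree.phi_psi]; exact ha
    · rintro ⟨T, ⟨hl, ha⟩, rfl⟩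
      exact ⟨by rw [TTree.leaves_phi]; exact hl, (avoids_phi T).mp ha⟩
  rw [av, av, himg, Set.ncard_image_of_injective _ hinj]
end

section
/- For all n ≥ 0, av_{t75}(n) = av_{t76}(n), where t75 = N(N(L,L,N(L,L,L)),L,L) and t76 = N(L,N(N(L,L,L),L,L),L). -/
/-- the 7-leaf pattern `t75 = N(N(L,L,N(L,L,L)),L,L)` -/
def t75 : TTree := .N (.N .L .L (.N .L .L .L)) .L .L

/-- the 7-leaf pattern `t76 = N(L,N(N(L,L,L),L,L),L)` -/
def t76 : TTree := .N .L (.N (.N .L .L .L) .L .L) .L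

namespace TTree

/-- Cyclically rotate children at every node. -/
def rot : TTree → TTree
  | .L => .L
  | .N a b c => .N (rot c) (rot a) (rot b)

/-- Inverse rotation. -/
def rot' : TTree → TTree
  | .L => .L
  | .N a b c => .N (rot' b) (rot' c) (rot' a)

lemma rot'_rot (T : TTree) : rot' (rot T) = T := by
  induction T with
  | L => rfl
  | N a b c ha hb hc => simp [rot, rot', ha, hb, hc]

lemma rot_injective : Function.Injective rot := by
  intro a b h
  rw [← rot'_rot a, h, rot'_rot]

lemma rot_rot' (T : TTree) : rot (rot' T) = T := by
  induction T with
  | L => rfl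
  | N a b c ha hb hc => simp [rot, rot', ha, hb, hc]

lemma rot_surjective : Function.Surjective rot := fun T => ⟨rot' T, rot_rot' T⟩

lemma rot_leaves (T : TTree) : (rot T).leaves = T.leaves := by
  induction T with
  | L => rfl
  | N a b c ha hb hc => simp [rot, leaves, ha, hb, hc]; ring

lemma occursAtRoot_rot (t T : TTree) :
    occursAtRoot (rot t) (rot T) ↔ occursAtRoot t T := by
  induction t generalizing T with
  | L => simp [rot, occursAtRoot]
  | N p q r hp hq hr =>
    cases T with
    | L => simp [rot, occursAtRoot]
    | N a b c =>
      simp only [rot, occursAtRoot, hp, hq, hr]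
      tauto

lemma contains_rot (t T : TTree) :
    contains (rot t) (rot T) ↔ contains t T := by
  induction T with
  | L =>
    cases t with
    | L => simp [rot, contains, occursAtRoot]
    | N p q r => simp [rot, contains, occursAtRoot]
  | N a b c ha hb hc =>
    simp only [rot, contains, ha, hb, hc, occursAtRoot_rot]
    have := occursAtRoot_rot t (.N a b c)
    rw [show rot (.N a b c) = .N (rot c) (rot a) (rot b) from rfl] at this
    rw [this]
    tauto

lemma rot_t75 : rot t75 = t76 := rfl

end TTree

/-- The patterns `t75` and `t76` are Wilf equivalent. -/
theorem av_t75_eq_av_t76 (n : ℕ) : av t75 n = av t76 n := by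
  have himg : {T : TTree | T.leaves = n ∧ T.avoids t76}
      = TTree.rot '' {T : TTree | T.leaves = n ∧ T.avoids t75} := by
    ext T
    constructor
    · rintro ⟨hl, hav⟩
      obtain ⟨S, rfl⟩ := TTree.rot_surjective T
      refine ⟨S, ⟨?_, ?_⟩, rfl⟩
      · rwa [TTree.rot_leaves] at hl
      · intro hcon
        exact hav (by rw [← TTree.rot_t75]; exact (TTree.contains_rot _ _).mpr hcon)
    · rintro ⟨S, ⟨hl, hav⟩, rfl⟩
      refine ⟨by rw [TTree.rot_leaves]; exact hl, ?_⟩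
      intro hcon
      rw [← TTree.rot_t75, TTree.contains_rot] at hcon
      exact hav hcon
  unfold av
  rw [himg, Set.ncard_image_of_injective _ TTree.rot_injective]
end

section
/- Let m ≥ 2. The map W sending an m-ary tree T to its word set — the set of all words over the alphabet {1,…,m} recording the sequence of child-indices along the path from the root to each m-leaf parent of T — is a bijection from the set of all m-ary trees onto the set of all finite prefix-free sets of words over {1,…,m} (where a set of words is prefix-free if no word in it is a proper prefix of another word in it). In particular, an ordered m-ary tree is uniquely determined by the set of paths from its root to its m-leaf parents. -/
inductive MTree (m : ℕ) : Type
  | leaf : MTree m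
  | node : (Fin m → MTree m) → MTree m

namespace MTree

variable {m : ℕ}

/-- the word set of an `m`-ary tree: the set of words over `{1,…,m}` recording
the child-indices along the path from the root to each `m`-leaf parent
(an internal vertex all of whose children are leaves) -/
def wordSet : MTree m → Set (List (Fin m))
  | .leaf => ∅
  | .node cs =>
      {w | (w = [] ∧ ∀ i, cs i = MTree.leaf) ∨
        ∃ i w', w = i :: w' ∧ w' ∈ wordSet (cs i)}

end MTree

/-- a set of words is prefix-free if no word in it is a proper prefix of
another word in it -/
def PrefixFree {α : Type*} (S : Set (List α)) : Prop :=
  ∀ u ∈ S, ∀ v ∈ S, u <+: v → u = v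

namespace MTree

variable {m : ℕ}

lemma mem_wordSet_node {cs : Fin m → MTree m} {w : List (Fin m)} :
    w ∈ wordSet (node cs) ↔
      (w = [] ∧ ∀ i, cs i = leaf) ∨ ∃ i w', w = i :: w' ∧ w' ∈ wordSet (cs i) :=
  Iff.rfl

lemma cons_mem_wordSet_node {cs : Fin m → MTree m} {i : Fin m} {w : List (Fin m)} :
    i :: w ∈ wordSet (node cs) ↔ w ∈ wordSet (cs i) := by
  constructor
  · rintro (⟨h, -⟩ | ⟨j, w', h, hw⟩)
    · exact absurd h (List.cons_ne_nil _ _)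
    · simp only [List.cons.injEq] at h
      obtain ⟨rfl, rfl⟩ := h
      exact hw
  · intro hw
    exact Or.inr ⟨i, w, rfl, hw⟩

lemma wordSet_nonempty : ∀ {T : MTree m}, T ≠ leaf → (wordSet T).Nonempty := by
  intro T
  induction T with
  | leaf => exact fun h => absurd rfl h
  | node cs ih =>
    intro _
    by_cases h : ∀ i, cs i = leaf
    · exact ⟨[], Or.inl ⟨rfl, h⟩⟩
    · push_neg at h
      obtain ⟨i, hi⟩ := h
      obtain ⟨w, hw⟩ := ih i hi
      exact ⟨i :: w, Or.inr ⟨i, w, rfl, hw⟩⟩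

lemma wordSet_finite : ∀ T : MTree m, (wordSet T).Finite := by
  intro T
  induction T with
  | leaf => simp [wordSet]
  | node cs ih =>
    refine Set.Finite.subset
      ((Set.finite_singleton ([] : List (Fin m))).union
        (Set.finite_iUnion fun i => (ih i).image (i :: ·))) ?_
    rintro w (⟨rfl, -⟩ | ⟨i, w', rfl, hw'⟩)
    · exact Or.inl rfl
    · exact Or.inr (Set.mem_iUnion.2 ⟨i, ⟨w', hw', rfl⟩⟩)

lemma wordSet_prefixFree : ∀ T : MTree m, PrefixFree (wordSet T) := by
  intro T
  induction T with
  | leaf => intro u hu; simp [wordSet] at hu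
  | node cs ih =>
    rintro u hu v hv hpre
    rcases hu with ⟨rfl, hall⟩ | ⟨i, u', rfl, hu'⟩
    · rcases hv with ⟨rfl, -⟩ | ⟨j, v', rfl, hv'⟩
      · rfl
      · rw [hall j] at hv'
        simp [wordSet] at hv'
    · rcases hv with ⟨rfl, -⟩ | ⟨j, v', rfl, hv'⟩
      · exact absurd (List.prefix_nil.mp hpre) (List.cons_ne_nil _ _)
      · rw [List.cons_prefix_cons] at hpre
        obtain ⟨rfl, hpre'⟩ := hpre
        rw [ih i u' hu' v' hv' hpre']

lemma wordSet_injective : Function.Injective (wordSet (m := m)) := by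
  intro T1
  induction T1 with
  | leaf =>
    intro T2 h
    by_contra hne
    obtain ⟨w, hw⟩ := wordSet_nonempty (Ne.symm hne)
    rw [← h] at hw
    simp [wordSet] at hw
  | node cs ih =>
    intro T2 h
    cases T2 with
    | leaf =>
      obtain ⟨w, hw⟩ := wordSet_nonempty (T := node cs) (fun h => nomatch h)
      rw [h] at hw
      simp [wordSet] at hw
    | node cs2 =>
      congr 1
      funext i
      apply ih i
      ext w
      rw [← cons_mem_wordSet_node, h, cons_mem_wordSet_node]

lemma node_leaf_wordSet : wordSet (node fun _ : Fin m => leaf) = {[]} := by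
  ext w
  constructor
  · rintro (⟨rfl, -⟩ | ⟨i, w', rfl, hw'⟩)
    · rfl
    · simp [wordSet] at hw'
  · rintro rfl
    exact Or.inl ⟨rfl, fun _ => rfl⟩

lemma exists_tree : ∀ n : ℕ, ∀ S : Set (List (Fin m)), PrefixFree S →
    (∀ w ∈ S, w.length ≤ n) → ∃ T : MTree m, wordSet T = S := by
  intro n
  induction n with
  | zero =>
    intro S hpf hlen
    have hsub : S ⊆ {[]} := fun w hw =>
      List.length_eq_zero_iff.mp (Nat.le_zero.mp (hlen w hw))
    rcases Set.subset_singleton_iff_eq.mp hsub with rfl | rfl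
    · exact ⟨leaf, rfl⟩
    · exact ⟨node fun _ => leaf, node_leaf_wordSet⟩
  | succ n ih =>
    intro S hpf hlen
    by_cases hnil : [] ∈ S
    · have : S = {[]} := by
        apply Set.eq_singleton_iff_unique_mem.mpr
        exact ⟨hnil, fun v hv => (hpf [] hnil v hv (List.nil_prefix)).symm⟩
      exact ⟨node fun _ => leaf, by rw [node_leaf_wordSet, this]⟩
    · rcases Set.eq_empty_or_nonempty S with rfl | hne
      · exact ⟨leaf, rfl⟩
      · set Si : Fin m → Set (List (Fin m)) := fun i => {w | i :: w ∈ S} with hSi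
        have hpfi : ∀ i, PrefixFree (Si i) := by
          intro i u hu v hv hpre
          have := hpf (i :: u) hu (i :: v) hv (List.cons_prefix_cons.mpr ⟨rfl, hpre⟩)
          simpa using this
        have hleni : ∀ i, ∀ w ∈ Si i, w.length ≤ n := by
          intro i w hw
          have := hlen (i :: w) hw
          simpa using this
        choose T hT using fun i => ih (Si i) (hpfi i) (hleni i)
        refine ⟨node T, ?_⟩
        ext w
        constructor
        · rintro (⟨rfl, hall⟩ | ⟨i, w', rfl, hw'⟩)
          · exfalso
            obtain ⟨v, hv⟩ := hne
            obtain ⟨j, v', rfl⟩ : ∃ j v', v = j :: v' := by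
              cases v with
              | nil => exact absurd hv hnil
              | cons j v' => exact ⟨j, v', rfl⟩
            have : v' ∈ wordSet (T j) := by rw [hT j]; exact hv
            rw [hall j] at this
            simp [wordSet] at this
          · rw [hT i] at hw'
            exact hw'
        · intro hw
          obtain ⟨j, w', rfl⟩ : ∃ j w', w = j :: w' := by
            cases w with
            | nil => exact absurd hw hnil
            | cons j w' => exact ⟨j, w', rfl⟩
          exact Or.inr ⟨j, w', rfl, by rw [hT j]; exact hw⟩

end MTree

/-- For `m ≥ 2`, the word-set map is a bijection from the set of all `m`-ary
trees onto the set of all finite prefix-free sets of words over `{1,…,m}`;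
in particular an `m`-ary tree is uniquely determined by its word set. -/
theorem wordSet_bijOn {m : ℕ} (hm : 2 ≤ m) :
    Set.BijOn (MTree.wordSet (m := m)) Set.univ
      {S : Set (List (Fin m)) | S.Finite ∧ PrefixFree S} := by
  refine ⟨fun T _ => ⟨MTree.wordSet_finite T, MTree.wordSet_prefixFree T⟩,
    fun T1 _ T2 _ h => MTree.wordSet_injective h, ?_⟩
  rintro S ⟨hfin, hpf⟩
  obtain ⟨T, hT⟩ := MTree.exists_tree (hfin.toFinset.sup List.length) S hpf
    (fun w hw => Finset.le_sup (hfin.mem_toFinset.mpr hw))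
  exact ⟨T, Set.mem_univ T, hT⟩
end
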